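/- arXiv:1410.5140 — 7 statements merged into one kernel-verified Lean document; each statement's English description precedes it below -/
import Mathlib

section
/- If A is an n×n complex matrix whose Hermitian real part Re A = (A + A*)/2 is positive definite, then A is invertible and (Re A)^{-1} ≥ Re(A^{-1}) in the Loewner (positive semidefinite) order. -/
open Matrix ComplexOrder

/-- The Hermitian real part `(A + Aᴴ)/2` of a complex matrix. -/
noncomputable def matRe {n : ℕ} (A : Matrix (Fin n) (Fin n) ℂ) : Matrix (Fin n) (Fin n) ℂ :=
  (1 / 2 : ℂ) • (A + Aᴴ)

theorem inv_re_ge_re_inv {n : ℕ} (A : Matrix (Fin n) (Fin n) ℂ)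
    (hA : (matRe A).PosDef) :
    IsUnit A ∧ ((matRe A)⁻¹ - matRe A⁻¹).PosSemidef := by
  have hAunit : IsUnit A := by
    rw [Matrix.isUnit_iff_isUnit_det, isUnit_iff_ne_zero]
    intro hdet
    obtain ⟨v, hv, hAv⟩ := (Matrix.exists_mulVec_eq_zero_iff).2 hdet
    have h2 : star v ⬝ᵥ (Aᴴ *ᵥ v) = 0 := by
      rw [Matrix.dotProduct_mulVec, ← Matrix.star_mulVec, hAv]
      simp
    have h1 : star v ⬝ᵥ (matRe A *ᵥ v) = 0 := by
      simp [matRe, Matrix.add_mulVec, Matrix.smul_mulVec, hAv, h2]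
    exact (hA.dotProduct_mulVec_pos hv).ne' h1
  refine ⟨hAunit, ?_⟩
  set H := matRe A with hHdef
  have hHH : Hᴴ = H := by
    simp only [hHdef, matRe, Matrix.conjTranspose_smul, Matrix.conjTranspose_add,
      Matrix.conjTranspose_conjTranspose]
    rw [add_comm]
    norm_num
  have hdA : IsUnit A.det := (Matrix.isUnit_iff_isUnit_det A).1 hAunit
  have hdH : IsUnit H.det := (Matrix.isUnit_iff_isUnit_det H).1 hA.isUnit
  have hA1 : A * A⁻¹ = 1 := Matrix.mul_nonsing_inv A hdA
  have hA2 : A⁻¹ * A = 1 := Matrix.nonsing_inv_mul A hdA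
  have hH2 : H⁻¹ * H = 1 := Matrix.nonsing_inv_mul H hdH
  have hAH : (A⁻¹)ᴴ = (Aᴴ)⁻¹ := Matrix.conjTranspose_nonsing_inv A
  set C : Matrix (Fin n) (Fin n) ℂ := 1 - A⁻¹ * H with hCdef
  have key : H⁻¹ - matRe A⁻¹ = C * H⁻¹ * Cᴴ := by
    have hCH : Cᴴ = 1 - H * (Aᴴ)⁻¹ := by
      rw [hCdef, Matrix.conjTranspose_sub, Matrix.conjTranspose_one,
        Matrix.conjTranspose_mul, hHH, hAH]
    have s1 : C * H⁻¹ = H⁻¹ - A⁻¹ := by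
      rw [hCdef, Matrix.sub_mul, Matrix.one_mul, Matrix.mul_assoc,
        Matrix.mul_nonsing_inv H hdH, Matrix.mul_one]
    have hAH1 : Aᴴ * (Aᴴ)⁻¹ = 1 := by
      rw [← hAH, ← Matrix.conjTranspose_mul, hA2, Matrix.conjTranspose_one]
    have s2 : A⁻¹ * H * (Aᴴ)⁻¹ = (1 / 2 : ℂ) • (A⁻¹ + (Aᴴ)⁻¹) := by
      rw [hHdef, matRe, Matrix.mul_smul, Matrix.smul_mul, Matrix.mul_add,
        Matrix.add_mul, hA2, Matrix.one_mul, Matrix.mul_assoc A⁻¹ Aᴴ, hAH1,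
        Matrix.mul_one, add_comm]
    rw [hCH, s1, Matrix.mul_sub, Matrix.mul_one, Matrix.sub_mul,
      ← Matrix.mul_assoc, hH2, Matrix.one_mul, ← Matrix.mul_assoc, s2]
    rw [matRe, hAH]
    module
  rw [key]
  exact Matrix.PosSemidef.mul_mul_conjTranspose_same (hA.inv).posSemidef C
end

section
/- If A is an n×n complex matrix with Re A positive definite, then Re(A^{-1}) = (Re A + (Im A)(Re A)^{-1}(Im A))^{-1}. -/
open Matrix ComplexOrder

/-- The Hermitian imaginary part `(A - Aᴴ)/(2i)` of a complex matrix. -/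
noncomputable def matIm {n : ℕ} (A : Matrix (Fin n) (Fin n) ℂ) : Matrix (Fin n) (Fin n) ℂ :=
  (2 * Complex.I)⁻¹ • (A - Aᴴ)

theorem re_inv_eq {n : ℕ} (A : Matrix (Fin n) (Fin n) ℂ)
    (hA : (matRe A).PosDef) :
    matRe A⁻¹ = (matRe A + matIm A * (matRe A)⁻¹ * matIm A)⁻¹ := by
  set R := matRe A with hRdef
  set M := matIm A with hMdef
  clear_value R M
  have hRH : Rᴴ = R := hA.isHermitian
  have hMH : Mᴴ = M := by
    ext i j
    simp [hMdef, matIm, conjTranspose_apply]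
    field_simp
    ring_nf
  have hdetR : IsUnit R.det := isUnit_iff_ne_zero.2 hA.det_pos.ne'
  have hdetA : IsUnit A.det := by
    rw [isUnit_iff_ne_zero]
    intro h
    obtain ⟨v, hv, hAv⟩ := (Matrix.exists_mulVec_eq_zero_iff).2 h
    have hpos := hA.dotProduct_mulVec_pos hv
    have h1 : star v ⬝ᵥ Aᴴ *ᵥ v = 0 := by
      rw [Matrix.dotProduct_mulVec, ← Matrix.star_mulVec, hAv]
      simp
    have h2 : star v ⬝ᵥ R *ᵥ v = 0 := by
      simp [hRdef, matRe, Matrix.add_mulVec, Matrix.smul_mulVec,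
        dotProduct_add, hAv, h1]
    rw [h2] at hpos
    exact lt_irrefl _ hpos
  have hdetAH : IsUnit Aᴴ.det := by
    rw [Matrix.det_conjTranspose, isUnit_iff_ne_zero]
    simpa using isUnit_iff_ne_zero.1 hdetA
  have hAeq : A = R + Complex.I • M := by
    ext i j
    simp [hRdef, hMdef, matRe, matIm]
    field_simp
    ring_nf
    rw [Complex.I_sq]
    ring
  have hAHeq : Aᴴ = R - Complex.I • M := by
    rw [hAeq]
    simp [conjTranspose_add, conjTranspose_smul, hRH, hMH, sub_eq_add_neg]
  have hRRinv : R * R⁻¹ = 1 := Matrix.mul_nonsing_inv R hdetR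
  have hRinvR : R⁻¹ * R = 1 := Matrix.nonsing_inv_mul R hdetR
  have hc1 : ∀ X : Matrix (Fin n) (Fin n) ℂ, R * (R⁻¹ * X) = X := fun X => by
    rw [← Matrix.mul_assoc, hRRinv, Matrix.one_mul]
  have key : Aᴴ * R⁻¹ * A = R + M * R⁻¹ * M := by
    rw [hAHeq]
    rw [hAeq]
    simp only [Matrix.sub_mul, Matrix.mul_add, smul_mul_assoc, mul_smul_comm, smul_smul,
      Complex.I_mul_I, Matrix.mul_assoc, hRinvR, Matrix.mul_one, hc1, neg_smul, one_smul,
      ← hMdef, smul_add, neg_one_mul, mul_neg, neg_neg]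
    match_scalars <;> simp [Complex.I_sq]
  rw [← key, Matrix.mul_inv_rev, Matrix.mul_inv_rev,
    Matrix.nonsing_inv_nonsing_inv R hdetR]
  have hAinvA : A⁻¹ * A = 1 := Matrix.nonsing_inv_mul A hdetA
  have hAHinv : Aᴴ * Aᴴ⁻¹ = 1 := Matrix.mul_nonsing_inv Aᴴ hdetAH
  have : matRe A⁻¹ = (1 / 2 : ℂ) • (A⁻¹ + Aᴴ⁻¹) := by
    rw [matRe, Matrix.conjTranspose_nonsing_inv]
  rw [this, hRdef, matRe]
  rw [← Matrix.mul_assoc]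
  simp only [Matrix.mul_smul, Matrix.smul_mul, Matrix.mul_add, Matrix.add_mul,
    Matrix.mul_assoc, hAHinv, Matrix.mul_one]
  rw [← Matrix.mul_assoc A⁻¹ A, hAinvA, Matrix.one_mul]
  rw [add_comm]
end

section
/- Let A, B be n×n positive definite matrices conformally partitioned into 2×2 blocks with square diagonal blocks. Then (A+B)/(A_{11}+B_{11}) ≥ A/A_{11} + B/B_{11} in the Loewner order, where X/X_{11} denotes the Schur complement X_{22} − X_{21} X_{11}^{-1} X_{12}. -/
open Matrix ComplexOrder

/-- The Schur complement `A/A₁₁ = A₂₂ - A₂₁ A₁₁⁻¹ A₁₂` of the (1,1) block. -/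
noncomputable def schur {p q : ℕ} (A : Matrix (Fin p ⊕ Fin q) (Fin p ⊕ Fin q) ℂ) :
    Matrix (Fin q) (Fin q) ℂ :=
  A.toBlocks₂₂ - A.toBlocks₂₁ * (A.toBlocks₁₁)⁻¹ * A.toBlocks₁₂

section aux

variable {p q : ℕ}

lemma toBlocks₂₁_eq {M : Matrix (Fin p ⊕ Fin q) (Fin p ⊕ Fin q) ℂ} (hM : M.IsHermitian) :
    M.toBlocks₂₁ = (M.toBlocks₁₂)ᴴ := by
  ext i j
  simpa [toBlocks₂₁, toBlocks₁₂, conjTranspose_apply] using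
    (congrFun (congrFun hM (Sum.inr i)) (Sum.inl j)).symm

lemma eq_fromBlocks {M : Matrix (Fin p ⊕ Fin q) (Fin p ⊕ Fin q) ℂ} (hM : M.IsHermitian) :
    M = fromBlocks M.toBlocks₁₁ M.toBlocks₁₂ (M.toBlocks₁₂)ᴴ M.toBlocks₂₂ := by
  rw [← toBlocks₂₁_eq hM, fromBlocks_toBlocks]

lemma posDef_toBlocks₁₁ {M : Matrix (Fin p ⊕ Fin q) (Fin p ⊕ Fin q) ℂ} (hM : M.PosDef) :
    M.toBlocks₁₁.PosDef := by
  refine posDef_iff_dotProduct_mulVec.mpr ⟨?_, ?_⟩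
  · ext i j
    simpa [toBlocks₁₁, conjTranspose_apply] using congrFun (congrFun hM.1 (Sum.inl i)) (Sum.inl j)
  · intro x hx
    have hx' : (Sum.elim x (0 : Fin q → ℂ)) ≠ 0 := by
      intro h
      apply hx
      ext i
      exact congrFun h (Sum.inl i)
    have := hM.dotProduct_mulVec_pos hx'
    rw [eq_fromBlocks hM.1] at this
    simpa [Function.star_sumElim, fromBlocks_mulVec, dotProduct_block] using this

end aux

theorem schur_add_ge {p q : ℕ} (A B : Matrix (Fin p ⊕ Fin q) (Fin p ⊕ Fin q) ℂ)
    (hA : A.PosDef) (hB : B.PosDef) :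
    (schur (A + B) - (schur A + schur B)).PosSemidef := by
  classical
  have hC : (A + B).PosDef := by
    refine posDef_iff_dotProduct_mulVec.mpr ⟨hA.1.add hB.1, fun x hx => ?_⟩
    have := add_pos (hA.dotProduct_mulVec_pos hx) (hB.dotProduct_mulVec_pos hx)
    simpa [add_mulVec, dotProduct_add] using this
  have hA11 := posDef_toBlocks₁₁ hA
  have hB11 := posDef_toBlocks₁₁ hB
  have hC11 := posDef_toBlocks₁₁ hC
  have iA : Invertible A.toBlocks₁₁ := hA11.isUnit.invertible
  have iB : Invertible B.toBlocks₁₁ := hB11.isUnit.invertible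
  have iC : Invertible (A + B).toBlocks₁₁ := hC11.isUnit.invertible
  have hschur : ∀ (M : Matrix (Fin p ⊕ Fin q) (Fin p ⊕ Fin q) ℂ), M.PosDef →
      (schur M).IsHermitian := by
    intro M hM
    have h1 := (Matrix.IsHermitian.fromBlocks₁₁ M.toBlocks₁₂ M.toBlocks₂₂
      (posDef_toBlocks₁₁ hM).1).mp (by rw [← eq_fromBlocks hM.1]; exact hM.1)
    rw [schur, toBlocks₂₁_eq hM.1]
    exact h1
  refine posSemidef_iff_dotProduct_mulVec.mpr ⟨((hschur _ hC).sub ((hschur _ hA).add (hschur _ hB))), fun x => ?_⟩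
  -- quadratic form identity
  have hquad : ∀ (M : Matrix (Fin p ⊕ Fin q) (Fin p ⊕ Fin q) ℂ) (hM : M.PosDef)
      [Invertible M.toBlocks₁₁] (y : Fin p → ℂ),
      star (Sum.elim y x) ⬝ᵥ M *ᵥ (Sum.elim y x) =
        star (y + ((M.toBlocks₁₁)⁻¹ * M.toBlocks₁₂) *ᵥ x) ᵥ* M.toBlocks₁₁ ⬝ᵥ
          (y + ((M.toBlocks₁₁)⁻¹ * M.toBlocks₁₂) *ᵥ x) + star x ⬝ᵥ (schur M) *ᵥ x := by
    intro M hM _ y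
    conv_lhs => rw [eq_fromBlocks hM.1]
    rw [dotProduct_mulVec, Matrix.schur_complement_eq₁₁ M.toBlocks₁₂ M.toBlocks₂₂ y x
      (posDef_toBlocks₁₁ hM).1, schur, toBlocks₂₁_eq hM.1, dotProduct_mulVec]
  have key : ∀ (M : Matrix (Fin p ⊕ Fin q) (Fin p ⊕ Fin q) ℂ) (hM : M.PosDef)
      [Invertible M.toBlocks₁₁] (y : Fin p → ℂ),
      star x ⬝ᵥ (schur M) *ᵥ x ≤ star (Sum.elim y x) ⬝ᵥ M *ᵥ (Sum.elim y x) := by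
    intro M hM _ y
    rw [hquad M hM y]
    refine le_add_of_nonneg_left ?_
    rw [← dotProduct_mulVec]
    exact (posDef_toBlocks₁₁ hM).posSemidef.dotProduct_mulVec_nonneg _
  set y₀ := -((((A+B).toBlocks₁₁)⁻¹ * (A+B).toBlocks₁₂) *ᵥ x) with hy₀
  have keyeq : star x ⬝ᵥ (schur (A + B)) *ᵥ x =
      star (Sum.elim y₀ x) ⬝ᵥ (A + B) *ᵥ (Sum.elim y₀ x) := by
    rw [hquad (A+B) hC y₀, hy₀, neg_add_cancel]
    simp
  have hsplit : star (Sum.elim y₀ x) ⬝ᵥ (A + B) *ᵥ (Sum.elim y₀ x) =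
      star (Sum.elim y₀ x) ⬝ᵥ A *ᵥ (Sum.elim y₀ x) +
        star (Sum.elim y₀ x) ⬝ᵥ B *ᵥ (Sum.elim y₀ x) := by
    simp [add_mulVec, dotProduct_add]
  have hle : star x ⬝ᵥ (schur A) *ᵥ x + star x ⬝ᵥ (schur B) *ᵥ x ≤
      star x ⬝ᵥ (schur (A+B)) *ᵥ x := by
    rw [keyeq, hsplit]; exact add_le_add (key A hA y₀) (key B hB y₀)
  have h0 : (0:ℂ) ≤ star x ⬝ᵥ (schur (A+B)) *ᵥ x -
      (star x ⬝ᵥ (schur A) *ᵥ x + star x ⬝ᵥ (schur B) *ᵥ x) := sub_nonneg.mpr hle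
  calc (0:ℂ) ≤ star x ⬝ᵥ (schur (A+B)) *ᵥ x -
      (star x ⬝ᵥ (schur A) *ᵥ x + star x ⬝ᵥ (schur B) *ᵥ x) := h0
    _ = star x ⬝ᵥ (schur (A + B) - (schur A + schur B)) *ᵥ x := by
        simp [sub_mulVec, add_mulVec, dotProduct_sub, dotProduct_add]
end

section
/- Let α ∈ [0, π/2) and let A be an n×n complex matrix with W(A) ⊆ S_α, partitioned into 2×2 blocks with A_{11} square. Then A_{11} is invertible and the Schur complement A/A_{11} = A_{22} − A_{21} A_{11}^{-1} A_{12} satisfies W(A/A_{11}) ⊆ S_α. -/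
open Matrix

/-- The numerical range (field of values) of a complex matrix. -/
def numericalRange {m : Type*} [Fintype m] (A : Matrix m m ℂ) : Set ℂ :=
  {z | ∃ x : m → ℂ, star x ⬝ᵥ x = 1 ∧ z = star x ⬝ᵥ A.mulVec x}

/-- The sector `S_α` of half-angle `α` around the positive real axis. -/
def sector (α : ℝ) : Set ℂ :=
  {z | 0 < z.re ∧ |z.im| ≤ z.re * Real.tan α}

lemma sector_smul_mem {α : ℝ} {t : ℝ} (ht : 0 < t) {z : ℂ}
    (h : (t : ℂ) * z ∈ sector α) : z ∈ sector α := by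
  obtain ⟨h1, h2⟩ := h
  simp only [Complex.mul_re, Complex.mul_im, Complex.ofReal_re, Complex.ofReal_im,
    zero_mul, sub_zero, zero_add, add_zero] at h1 h2
  refine ⟨by nlinarith, ?_⟩
  rw [abs_mul, abs_of_pos ht, mul_assoc] at h2
  exact le_of_mul_le_mul_left h2 ht

lemma dot_self_real {m : Type*} [Fintype m] (x : m → ℂ) :
    star x ⬝ᵥ x = ((∑ i, Complex.normSq (x i) : ℝ) : ℂ) := by
  simp [dotProduct, Complex.normSq_eq_conj_mul_self]

lemma mem_sector_of_ne_zero {m : Type*} [Fintype m] {α : ℝ} {A : Matrix m m ℂ}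
    (hA : numericalRange A ⊆ sector α) (x : m → ℂ) (hx : x ≠ 0) :
    star x ⬝ᵥ A.mulVec x ∈ sector α := by
  set r : ℝ := ∑ i, Complex.normSq (x i) with hr
  have hrpos : 0 < r := by
    have : ∃ i, x i ≠ 0 := by
      by_contra h
      push_neg at h
      exact hx (funext h)
    obtain ⟨i, hi⟩ := this
    exact Finset.sum_pos' (fun j _ => Complex.normSq_nonneg _)
      ⟨i, Finset.mem_univ i, Complex.normSq_pos.mpr hi⟩
  set s : ℝ := Real.sqrt r⁻¹ with hs
  have hss : s * s = r⁻¹ := Real.mul_self_sqrt (by positivity)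
  have hstar : star ((s : ℝ) : ℂ) = ((s : ℝ) : ℂ) := by
    simp [Complex.star_def, Complex.conj_ofReal]
  have hfac : ((r⁻¹ : ℝ) : ℂ) = star ((s : ℝ) : ℂ) * ((s : ℝ) : ℂ) := by
    rw [hstar]; norm_cast; exact hss.symm
  have key : ((r⁻¹ : ℝ) : ℂ) * (star x ⬝ᵥ A.mulVec x) ∈ sector α := by
    apply hA
    refine ⟨(s : ℂ) • x, ?_, ?_⟩
    · rw [star_smul, smul_dotProduct, dotProduct_smul, dot_self_real]
      simp only [star_trivial, smul_eq_mul]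
      rw [← mul_assoc, ← hfac, ← hr]
      norm_cast
      rw [inv_mul_cancel₀ hrpos.ne']
    · rw [star_smul, smul_dotProduct, A.mulVec_smul, dotProduct_smul]
      simp only [star_trivial, smul_eq_mul]
      rw [← mul_assoc, ← hfac]
  exact sector_smul_mem (by positivity) key

theorem schur_numericalRange_subset {p q : ℕ} (α : ℝ) (hα : α ∈ Set.Ico 0 (Real.pi / 2))
    (A : Matrix (Fin p ⊕ Fin q) (Fin p ⊕ Fin q) ℂ) (hA : numericalRange A ⊆ sector α) :
    IsUnit A.toBlocks₁₁ ∧ numericalRange (schur A) ⊆ sector α := by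
  have hblocks : A = fromBlocks A.toBlocks₁₁ A.toBlocks₁₂ A.toBlocks₂₁ A.toBlocks₂₂ :=
    (fromBlocks_toBlocks A).symm
  set A₁₁ := A.toBlocks₁₁ with hA11def
  set A₁₂ := A.toBlocks₁₂
  set A₂₁ := A.toBlocks₂₁
  set A₂₂ := A.toBlocks₂₂
  have hunit : IsUnit A₁₁ := by
    rw [← Matrix.mulVec_injective_iff_isUnit]
    intro u v huv
    by_contra hne
    have hxy : u - v ≠ 0 := sub_ne_zero_of_ne hne
    have h0 : A₁₁.mulVec (u - v) = 0 := by
      rw [Matrix.mulVec_sub, huv, sub_self]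
    set w := u - v
    set x : (Fin p ⊕ Fin q) → ℂ := Sum.elim w 0 with hxdef
    have hx0 : x ≠ 0 := by
      intro h
      apply hxy
      funext i
      have := congrFun h (Sum.inl i)
      simpa [hxdef] using this
    have hsec := mem_sector_of_ne_zero hA x hx0
    have hz : star x ⬝ᵥ A.mulVec x = 0 := by
      conv_lhs => rw [hblocks]
      simp only [hxdef, Function.star_sumElim, fromBlocks_mulVec,
        Sum.elim_comp_inl, Sum.elim_comp_inr,
        sumElim_dotProduct_sumElim, Matrix.mulVec_zero, add_zero, zero_add, h0,
        dotProduct_zero, star_zero, zero_dotProduct, add_zero]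
    rw [hz] at hsec
    exact lt_irrefl 0 hsec.1
  refine ⟨hunit, ?_⟩
  have hAinv : A₁₁ * A₁₁⁻¹ = 1 := Matrix.mul_nonsing_inv _ ((Matrix.isUnit_iff_isUnit_det _).mp hunit)
  rintro z ⟨y, hy1, rfl⟩
  have hy0 : y ≠ 0 := by
    intro h
    rw [h] at hy1
    simp at hy1
  set u : Fin p → ℂ := -((A₁₁⁻¹).mulVec (A₁₂.mulVec y)) with hu
  set x : (Fin p ⊕ Fin q) → ℂ := Sum.elim u y with hxdef
  have hx0 : x ≠ 0 := by
    intro h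
    apply hy0
    funext i
    have := congrFun h (Sum.inr i)
    simpa [hxdef] using this
  have hA11u : A₁₁.mulVec u = -(A₁₂.mulVec y) := by
    rw [hu, Matrix.mulVec_neg, Matrix.mulVec_mulVec, hAinv, Matrix.one_mulVec]
  have hz : star x ⬝ᵥ A.mulVec x = star y ⬝ᵥ (schur A).mulVec y := by
    conv_lhs => rw [hblocks]
    simp only [hxdef, Function.star_sumElim, fromBlocks_mulVec,
      Sum.elim_comp_inl, Sum.elim_comp_inr,
      sumElim_dotProduct_sumElim, hA11u, neg_add_cancel, dotProduct_zero, zero_add]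
    rw [schur, ← hA11def]
    simp only [Matrix.sub_mulVec, dotProduct_sub, dotProduct_add, hu,
      Matrix.mulVec_neg, dotProduct_neg, Matrix.mulVec_mulVec, Matrix.mul_assoc]
    ring
  rw [← hz]
  exact mem_sector_of_ne_zero hA x hx0
end

section
/- (Ostrowski–Taussky) If A is an n×n complex matrix with Re A positive definite, then det(Re A) ≤ |det A|. -/
open Matrix ComplexOrder

/-- Ostrowski–Taussky inequality. -/
theorem ostrowski_taussky {n : ℕ} (A : Matrix (Fin n) (Fin n) ℂ)
    (hA : (matRe A).PosDef) :
    (matRe A).det.re ≤ ‖A.det‖ := by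
  set H := matRe A with hHdef
  set K : Matrix (Fin n) (Fin n) ℂ := ((2 * Complex.I)⁻¹) • (A - Aᴴ) with hKdef
  have hKherm : K.IsHermitian := by
    rw [Matrix.IsHermitian, hKdef, Matrix.conjTranspose_smul, Matrix.conjTranspose_sub,
      Matrix.conjTranspose_conjTranspose]
    have hst : star ((2 * Complex.I)⁻¹) = -(2 * Complex.I)⁻¹ := by
      rw [star_inv₀]
      have : star (2 * Complex.I) = -(2 * Complex.I) := by
        simp [star_mul', Complex.star_def, Complex.conj_I]
      rw [this, inv_neg]
    rw [hst]
    module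
  have hAeq : A = H + Complex.I • K := by
    rw [hHdef, hKdef, matRe]
    have h2 : (2 : ℂ) ≠ 0 := two_ne_zero
    have hI : Complex.I ≠ 0 := Complex.I_ne_zero
    rw [smul_smul]
    have : Complex.I * (2 * Complex.I)⁻¹ = 1/2 := by
      field_simp
    rw [this]
    module
  -- square root of H
  have hHps := hA.posSemidef
  open scoped MatrixOrder in set R := CFC.sqrt H with hRdef
  have hR2 : R * R = H := by
    open scoped MatrixOrder in exact CFC.sqrt_mul_sqrt_self H hHps.nonneg
  have hRherm : R.IsHermitian := by
    open scoped MatrixOrder in exact (CFC.sqrt_nonneg H).posSemidef.1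
  have hHdetpos : (0:ℂ) < H.det := hA.det_pos
  have hHre : 0 < H.det.re ∧ H.det.im = 0 := by
    rw [Complex.lt_def] at hHdetpos
    simpa using ⟨hHdetpos.1, hHdetpos.2.symm⟩
  have hRdet : IsUnit R.det := by
    have hmul : R.det * R.det = H.det := by rw [← Matrix.det_mul, hR2]
    have hne : R.det ≠ 0 := by
      intro h
      rw [h, mul_zero] at hmul
      exact hHdetpos.ne' hmul.symm
    exact hne.isUnit
  set S := R⁻¹ * K * R⁻¹ with hSdef
  have hRinvherm : (R⁻¹).IsHermitian := hRherm.inv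
  have hSherm : S.IsHermitian := by
    rw [Matrix.IsHermitian, hSdef, Matrix.conjTranspose_mul, Matrix.conjTranspose_mul,
      hKherm.eq, hRinvherm.eq, mul_assoc]
  have hfact : A = R * (1 + Complex.I • S) * R := by
    have h1 : R * S * R = K := by
      rw [hSdef]
      have : R * (R⁻¹ * K * R⁻¹) * R = (R * R⁻¹) * K * (R⁻¹ * R) := by
        noncomm_ring
      rw [this, Matrix.mul_nonsing_inv _ hRdet, Matrix.nonsing_inv_mul _ hRdet, one_mul, mul_one]
    have h2 : R * (1 + Complex.I • S) * R = R * R + Complex.I • (R * S * R) := by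
      rw [mul_add, mul_one, add_mul, Matrix.mul_smul, Matrix.smul_mul]
    rw [hAeq, h2, hR2, h1]
  -- spectral theorem for S
  set U : Matrix (Fin n) (Fin n) ℂ := (hSherm.eigenvectorUnitary : Matrix (Fin n) (Fin n) ℂ)
    with hUdef
  set lam := hSherm.eigenvalues with hlam
  set D : Matrix (Fin n) (Fin n) ℂ := diagonal (RCLike.ofReal ∘ lam) with hDdef
  have hspec : S = U * D * Uᴴ := by
    rw [hUdef, hDdef, hlam, ← Matrix.star_eq_conjTranspose]
    exact hSherm.spectral_theorem
  have hU1 : U * Uᴴ = 1 := by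
    rw [← Matrix.star_eq_conjTranspose]
    exact Matrix.mem_unitaryGroup_iff.mp hSherm.eigenvectorUnitary.2
  have h1S : 1 + Complex.I • S = U * (1 + Complex.I • D) * Uᴴ := by
    rw [mul_add, mul_one, add_mul, hU1, Matrix.mul_smul, Matrix.smul_mul, ← hspec]
  have hdetA : A.det = H.det * (U.det * (1 + Complex.I • D).det * Uᴴ.det) := by
    rw [hfact, h1S]
    have hRR : R.det * R.det = H.det := by rw [← Matrix.det_mul, hR2]
    rw [Matrix.det_mul, Matrix.det_mul, Matrix.det_mul, Matrix.det_mul]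
    rw [← hRR]; ring
  have hUU : U.det * Uᴴ.det = 1 := by
    rw [← Matrix.det_mul, hU1, Matrix.det_one]
  -- the diagonal determinant
  have hdiag : (1 + Complex.I • D).det = ∏ i, (1 + Complex.I * (lam i : ℂ)) := by
    rw [hDdef]
    have : (1 : Matrix (Fin n) (Fin n) ℂ) + Complex.I • diagonal (RCLike.ofReal ∘ lam)
        = diagonal (fun i => 1 + Complex.I * (lam i : ℂ)) := by
      ext i j
      simp only [Matrix.add_apply, Matrix.smul_apply, Matrix.one_apply, Matrix.diagonal_apply,
        Function.comp_apply, smul_eq_mul, RCLike.ofReal_alg]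
      split_ifs <;> simp
    rw [this, Matrix.det_diagonal]
  have hone_le : 1 ≤ ‖(1 + Complex.I • D).det‖ := by
    rw [hdiag, norm_prod]
    calc (1:ℝ) = ∏ _i : Fin n, (1:ℝ) := by simp
    _ ≤ ∏ i, ‖(1 + Complex.I * (lam i : ℂ))‖ := by
      refine Finset.prod_le_prod (fun i _ => zero_le_one) fun i _ => ?_
      have h1 : |(1 + Complex.I * (lam i : ℂ)).re| ≤ ‖(1 + Complex.I * (lam i : ℂ))‖ :=
      Complex.abs_re_le_norm _
      have h2 : (1 + Complex.I * (lam i : ℂ)).re = 1 := by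
        simp [Complex.add_re, Complex.mul_re]
      rw [h2] at h1
      simpa using h1
  -- assemble
  have habs : ‖A.det‖ = ‖H.det‖ * ‖(1 + Complex.I • D).det‖ := by
    rw [hdetA]
    rw [show H.det * (U.det * (1 + Complex.I • D).det * Uᴴ.det)
        = (H.det * (1 + Complex.I • D).det) * (U.det * Uᴴ.det) by ring, hUU, mul_one,
      norm_mul]
  have hHabs : ‖H.det‖ = H.det.re := by
    have h : H.det = (H.det.re : ℂ) := by
      apply Complex.ext <;> simp [hHre.2]
    calc ‖H.det‖ = ‖((H.det.re : ℂ))‖ := by rw [← h]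
    _ = H.det.re := by rw [Complex.norm_real, Real.norm_eq_abs, abs_of_pos hHre.1]
  rw [habs, hHabs]
  exact le_mul_of_one_le_right hHre.1.le hone_le
end

section
/- Let a_0 = b_0 = 1 and a_k, b_k > 0 for k = 1, …, n. Then ∏_{k=1}^n (a_k/a_{k−1} + b_k/b_{k−1}) ≥ a_n(1 + ∑_{s=1}^{n−1} b_s/a_s) + b_n(1 + ∑_{s=1}^{n−1} a_s/b_s) + (2^n − 2n)√(a_n b_n). -/
private lemma amgm_aux (x y c : ℝ) (hx : 0 ≤ x) (hy : 0 ≤ y) (h : x * y = c) :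
    2 * Real.sqrt c ≤ x + y := by
  subst h
  rw [Real.sqrt_mul hx]
  nlinarith [sq_nonneg (Real.sqrt x - Real.sqrt y), Real.sq_sqrt hx, Real.sq_sqrt hy,
    Real.sqrt_nonneg x, Real.sqrt_nonneg y]

private lemma claim2_aux (m : ℕ) (a b : ℕ → ℝ) (ha0 : a 0 = 1) (hb0 : b 0 = 1)
    (ha : ∀ k, 1 ≤ k → k ≤ m + 1 → 0 < a k) (hb : ∀ k, 1 ≤ k → k ≤ m + 1 → 0 < b k) :
    a (m + 1) * (1 + ∑ s ∈ Finset.Icc 1 m, b s / a s) +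
      b (m + 1) * (1 + ∑ s ∈ Finset.Icc 1 m, a s / b s) +
      ((2 : ℝ) ^ (m + 1) - 2 * (m + 1 : ℕ)) * Real.sqrt (a (m + 1) * b (m + 1)) ≤
    ∏ k ∈ Finset.Icc 1 (m + 1), (a k / a (k - 1) + b k / b (k - 1)) := by
  induction m with
  | zero =>
      rw [show (1:ℕ)+0 = 1 from rfl] at *
      simp only [show Finset.Icc 1 0 = ∅ from rfl, Finset.sum_empty, Finset.Icc_self,
        Finset.prod_singleton]
      norm_num [ha0, hb0]
  | succ p ih =>
      have ha' : ∀ k, 1 ≤ k → k ≤ p + 1 → 0 < a k := fun k h1 h2 => ha k h1 (by omega)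
      have hb' : ∀ k, 1 ≤ k → k ≤ p + 1 → 0 < b k := fun k h1 h2 => hb k h1 (by omega)
      have IH := ih ha' hb'
      have hA : 0 < a (p + 1) := ha _ (by omega) (by omega)
      have hB : 0 < b (p + 1) := hb _ (by omega) (by omega)
      have hA' : 0 < a (p + 2) := ha _ (by omega) (by omega)
      have hB' : 0 < b (p + 2) := hb _ (by omega) (by omega)
      set A := a (p + 1) with hAdef
      set B := b (p + 1) with hBdef
      set A' := a (p + 2) with hA'def
      set B' := b (p + 2) with hB'def
      set X := ∑ s ∈ Finset.Icc 1 p, b s / a s with hXdef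
      set Y := ∑ s ∈ Finset.Icc 1 p, a s / b s with hYdef
      set c : ℝ := (2 : ℝ) ^ (p + 1) - 2 * ((p + 1 : ℕ) : ℝ) with hcdef
      set s : ℝ := Real.sqrt (A * B) with hsdef
      -- nonnegativity of c
      have hcnat : 2 * (p + 1) ≤ 2 ^ (p + 1) := by
        have h1 := Nat.lt_two_pow_self (n := p)
        calc 2 * (p + 1) ≤ 2 * 2 ^ p := by omega
          _ = 2 ^ (p + 1) := by rw [pow_succ]; ring
      have hc : 0 ≤ c := by
        rw [hcdef]
        have : ((2 * (p + 1) : ℕ) : ℝ) ≤ ((2 ^ (p + 1) : ℕ) : ℝ) := by exact_mod_cast hcnat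
        push_cast at this ⊢
        linarith
      -- relation c' = 2c + 2p
      have hc' : (2 : ℝ) ^ (p + 1 + 1) - 2 * ((p + 1 + 1 : ℕ) : ℝ) = 2 * c + 2 * p := by
        rw [hcdef]; push_cast; ring
      -- split product
      rw [Finset.prod_Icc_succ_top (by omega : 1 ≤ p + 1 + 1)]
      have h21 : p + 1 + 1 - 1 = p + 1 := rfl
      rw [h21]
      -- split sums
      rw [Finset.sum_Icc_succ_top (by omega : 1 ≤ p + 1) (fun s => b s / a s),
          Finset.sum_Icc_succ_top (by omega : 1 ≤ p + 1) (fun s => a s / b s)]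
      rw [← hXdef, ← hYdef, ← hAdef, ← hBdef, ← hA'def, ← hB'def]
      have hfac : 0 < A' / A + B' / B := by positivity
      have h1 : (A * (1 + X) + B * (1 + Y) + c * s) * (A' / A + B' / B) ≤
          (∏ k ∈ Finset.Icc 1 (p + 1), (a k / a (k - 1) + b k / b (k - 1))) * (A' / A + B' / B) :=
        mul_le_mul_of_nonneg_right IH hfac.le
      refine le_trans ?_ h1
      -- key inequalities
      have hs2 : s * s = A * B := Real.mul_self_sqrt (by positivity)
      have key1 : 2 * Real.sqrt (A' * B') ≤ s * A' / A + s * B' / B := by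
        apply amgm_aux _ _ _ (by positivity) (by positivity)
        field_simp
        linear_combination hs2
      have key2 : 2 * (p : ℝ) * Real.sqrt (A' * B') ≤
          ∑ t ∈ Finset.Icc 1 p, (A * B' * (b t / a t) / B + B * A' * (a t / b t) / A) := by
        have hpt : ∀ t ∈ Finset.Icc 1 p, 2 * Real.sqrt (A' * B') ≤
            A * B' * (b t / a t) / B + B * A' * (a t / b t) / A := by
          intro t ht
          rw [Finset.mem_Icc] at ht
          have hat : 0 < a t := ha t ht.1 (by omega)
          have hbt : 0 < b t := hb t ht.1 (by omega)
          apply amgm_aux _ _ _ (by positivity) (by positivity)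
          field_simp
        calc 2 * (p : ℝ) * Real.sqrt (A' * B')
            = ∑ _t ∈ Finset.Icc 1 p, 2 * Real.sqrt (A' * B') := by
              rw [Finset.sum_const, Nat.card_Icc]
              simp
              ring
          _ ≤ _ := Finset.sum_le_sum hpt
      have hsum : ∑ t ∈ Finset.Icc 1 p, (A * B' * (b t / a t) / B + B * A' * (a t / b t) / A)
          = A * B' * X / B + B * A' * Y / A := by
        rw [Finset.sum_add_distrib]
        congr 1
        · rw [show A * B' * X / B = (A * B' / B) * X by ring, hXdef, Finset.mul_sum]
          exact Finset.sum_congr rfl fun t _ => by ring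
        · rw [show B * A' * Y / A = (B * A' / A) * Y by ring, hYdef, Finset.mul_sum]
          exact Finset.sum_congr rfl fun t _ => by ring
      rw [hsum] at key2
      have key : ((2 : ℝ) ^ (p + 1 + 1) - 2 * ((p + 1 + 1 : ℕ) : ℝ)) * Real.sqrt (A' * B') ≤
          A * B' * X / B + B * A' * Y / A + c * (s * A' / A + s * B' / B) := by
        rw [hc']
        have h2 : 2 * c * Real.sqrt (A' * B') ≤ c * (s * A' / A + s * B' / B) := by
          have := mul_le_mul_of_nonneg_left key1 hc
          linarith
        nlinarith [key2]
      have expand : (A * (1 + X) + B * (1 + Y) + c * s) * (A' / A + B' / B)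
          = A' * (1 + (X + B / A)) + B' * (1 + (Y + A / B)) +
            (A * B' * X / B + B * A' * Y / A + c * (s * A' / A + s * B' / B)) := by
        field_simp
        ring
      rw [expand]
      linarith [key]

theorem claim2 (n : ℕ) (hn : 1 ≤ n) (a b : ℕ → ℝ) (ha0 : a 0 = 1) (hb0 : b 0 = 1)
    (ha : ∀ k, 1 ≤ k → k ≤ n → 0 < a k) (hb : ∀ k, 1 ≤ k → k ≤ n → 0 < b k) :
    a n * (1 + ∑ s ∈ Finset.Icc 1 (n - 1), b s / a s) +
      b n * (1 + ∑ s ∈ Finset.Icc 1 (n - 1), a s / b s) +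
      ((2 : ℝ) ^ n - 2 * n) * Real.sqrt (a n * b n) ≤
    ∏ k ∈ Finset.Icc 1 n, (a k / a (k - 1) + b k / b (k - 1)) := by
  obtain ⟨m, rfl⟩ : ∃ m, n = m + 1 := ⟨n - 1, by omega⟩
  have h := claim2_aux m a b ha0 hb0 ha hb
  simpa using h
end

section
/- For positive reals x_1, …, x_n: ∏_{k=1}^n (1 + x_k) ≥ 1 + ∑_{s=1}^n x_1 x_2 ⋯ x_s + ∑_{s=2}^n x_s x_{s+1} ⋯ x_n + (2^n − 2n) √(x_1 x_2 ⋯ x_n). -/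
open Finset

theorem prod_one_add_ge (n : ℕ) (hn : 1 ≤ n) (x : ℕ → ℝ)
    (hx : ∀ k, 1 ≤ k → k ≤ n → 0 < x k) :
    1 + ∑ s ∈ Finset.Icc 1 n, ∏ k ∈ Finset.Icc 1 s, x k +
      ∑ s ∈ Finset.Icc 2 n, ∏ k ∈ Finset.Icc s n, x k +
      ((2 : ℝ) ^ n - 2 * n) * Real.sqrt (∏ k ∈ Finset.Icc 1 n, x k) ≤
    ∏ k ∈ Finset.Icc 1 n, (1 + x k) := by
  classical
  set N : Finset ℕ := Finset.Icc 1 n with hN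
  set P : ℝ := ∏ k ∈ N, x k with hP
  have hxS : ∀ S : Finset ℕ, S ⊆ N → 0 < ∏ k ∈ S, x k := fun S hS =>
    prod_pos fun k hk => by
      have hk' := hS hk; rw [hN, mem_Icc] at hk'; exact hx k hk'.1 hk'.2
  have hPpos : 0 < P := hxS N le_rfl
  have hsqrt : 0 ≤ Real.sqrt P := Real.sqrt_nonneg P
  -- the distinguished family A
  set A : Finset (Finset ℕ) :=
    insert ∅ ((Finset.Icc 1 n).image (fun s => Finset.Icc 1 s) ∪
      (Finset.Icc 2 n).image (fun s => Finset.Icc s n)) with hA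
  have hmemA : ∀ S : Finset ℕ, S ∈ A ↔
      (S = ∅ ∨ (∃ s, 1 ≤ s ∧ s ≤ n ∧ S = Finset.Icc 1 s) ∨
        (∃ s, 2 ≤ s ∧ s ≤ n ∧ S = Finset.Icc s n)) := by
    intro S
    simp only [hA, mem_insert, mem_union, mem_image, mem_Icc]
    constructor
    · rintro (h | ⟨s, ⟨h1, h2⟩, rfl⟩ | ⟨s, ⟨h1, h2⟩, rfl⟩)
      · exact Or.inl h
      · exact Or.inr (Or.inl ⟨s, h1, h2, rfl⟩)
      · exact Or.inr (Or.inr ⟨s, h1, h2, rfl⟩)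
    · rintro (h | ⟨s, h1, h2, rfl⟩ | ⟨s, h1, h2, rfl⟩)
      · exact Or.inl h
      · exact Or.inr (Or.inl ⟨s, ⟨h1, h2⟩, rfl⟩)
      · exact Or.inr (Or.inr ⟨s, ⟨h1, h2⟩, rfl⟩)
  have hAsub : A ⊆ N.powerset := by
    intro S hS
    rw [hmemA] at hS
    rw [mem_powerset]
    rcases hS with h | ⟨s, h1, h2, rfl⟩ | ⟨s, h1, h2, rfl⟩
    · simp [h]
    · intro k hk; rw [mem_Icc] at hk ⊢; omega
    · intro k hk; rw [mem_Icc] at hk ⊢; omega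
  set B : Finset (Finset ℕ) := N.powerset \ A with hB
  -- complement is an involution of B
  have hNA : N ∈ A := by rw [hmemA]; exact Or.inr (Or.inl ⟨n, hn, le_rfl, rfl⟩)
  have hcA : ∀ S : Finset ℕ, S ⊆ N → (N \ S) ∈ A → S ∈ A := by
    intro S hS h
    rw [hmemA] at h
    rcases h with h | ⟨s, h1, h2, he⟩ | ⟨s, h1, h2, he⟩
    · have : S = N := by
        have := sdiff_eq_empty_iff_subset.mp h
        exact le_antisymm hS this
      rw [this]; exact hNA
    · have hS' : S = Finset.Icc (s + 1) n := by
        have : N \ (N \ S) = S := Finset.sdiff_sdiff_eq_self hS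
        rw [← this, he]
        ext k; simp only [hN, mem_sdiff, mem_Icc]; omega
      rw [hmemA]
      by_cases hs : s = n
      · left; rw [hS', hs]; exact Finset.Icc_eq_empty (by omega)
      · right; right; exact ⟨s + 1, by omega, by omega, hS'⟩
    · have hS' : S = Finset.Icc 1 (s - 1) := by
        have : N \ (N \ S) = S := Finset.sdiff_sdiff_eq_self hS
        rw [← this, he]
        ext k; simp only [hN, mem_sdiff, mem_Icc]; omega
      rw [hmemA]
      right; left; exact ⟨s - 1, by omega, by omega, hS'⟩
  have hcB : ∀ S ∈ B, (N \ S) ∈ B := by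
    intro S hS
    rw [hB, mem_sdiff, mem_powerset] at hS ⊢
    refine ⟨sdiff_subset, fun h => hS.2 (hcA S hS.1 h)⟩
  have hcc : ∀ S ∈ B, N \ (N \ S) = S := by
    intro S hS
    rw [hB, mem_sdiff, mem_powerset] at hS
    exact Finset.sdiff_sdiff_eq_self hS.1
  -- per-pair AM-GM
  have hpair : ∀ S ∈ B, 2 * Real.sqrt P ≤ (∏ k ∈ S, x k) + ∏ k ∈ N \ S, x k := by
    intro S hS
    rw [hB, mem_sdiff, mem_powerset] at hS
    have h1 : 0 < ∏ k ∈ S, x k := hxS S hS.1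
    have h2 : 0 < ∏ k ∈ N \ S, x k := hxS _ sdiff_subset
    have hmul : (∏ k ∈ N \ S, x k) * ∏ k ∈ S, x k = P := Finset.prod_sdiff hS.1
    have : Real.sqrt P = Real.sqrt (∏ k ∈ S, x k) * Real.sqrt (∏ k ∈ N \ S, x k) := by
      rw [← Real.sqrt_mul h1.le, mul_comm, hmul]
    rw [this]
    calc 2 * (Real.sqrt (∏ k ∈ S, x k) * Real.sqrt (∏ k ∈ N \ S, x k))
        = 2 * Real.sqrt (∏ k ∈ S, x k) * Real.sqrt (∏ k ∈ N \ S, x k) := by ring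
      _ ≤ Real.sqrt (∏ k ∈ S, x k) ^ 2 + Real.sqrt (∏ k ∈ N \ S, x k) ^ 2 :=
          two_mul_le_add_sq _ _
      _ = (∏ k ∈ S, x k) + ∏ k ∈ N \ S, x k := by
          rw [Real.sq_sqrt h1.le, Real.sq_sqrt h2.le]
  -- sum over B bound
  have hBsum : (B.card : ℝ) * Real.sqrt P ≤ ∑ S ∈ B, ∏ k ∈ S, x k := by
    have hre : ∑ S ∈ B, ∏ k ∈ N \ S, x k = ∑ S ∈ B, ∏ k ∈ S, x k :=
      Finset.sum_nbij' (fun S => N \ S) (fun S => N \ S) hcB hcB hcc hcc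
        (fun S hS => rfl)
    have h2 : (B.card : ℝ) * (2 * Real.sqrt P) ≤ 2 * ∑ S ∈ B, ∏ k ∈ S, x k := by
      calc (B.card : ℝ) * (2 * Real.sqrt P) = ∑ _S ∈ B, 2 * Real.sqrt P := by
            rw [Finset.sum_const, nsmul_eq_mul]
        _ ≤ ∑ S ∈ B, ((∏ k ∈ S, x k) + ∏ k ∈ N \ S, x k) := Finset.sum_le_sum hpair
        _ = 2 * ∑ S ∈ B, ∏ k ∈ S, x k := by
            rw [Finset.sum_add_distrib, hre]; ring
    nlinarith [h2]
  -- cardinalities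
  have hinj1 : Set.InjOn (fun s => Finset.Icc 1 s) ↑(Finset.Icc 1 n) := by
    intro a ha b hb h
    simp only [Finset.coe_Icc, Set.mem_Icc] at ha hb
    have h' : Finset.Icc 1 a = Finset.Icc 1 b := h
    have ha' : a ∈ Finset.Icc 1 b := by rw [← h']; rw [mem_Icc]; omega
    have hb' : b ∈ Finset.Icc 1 a := by rw [h']; rw [mem_Icc]; omega
    rw [mem_Icc] at ha' hb'; omega
  have hinj2 : Set.InjOn (fun s => Finset.Icc s n) ↑(Finset.Icc 2 n) := by
    intro a ha b hb h
    simp only [Finset.coe_Icc, Set.mem_Icc] at ha hb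
    have h' : Finset.Icc a n = Finset.Icc b n := h
    have ha' : a ∈ Finset.Icc b n := by rw [← h']; rw [mem_Icc]; omega
    have hb' : b ∈ Finset.Icc a n := by rw [h']; rw [mem_Icc]; omega
    rw [mem_Icc] at ha' hb'; omega
  have hdisj : Disjoint ((Finset.Icc 1 n).image (fun s => Finset.Icc 1 s))
      ((Finset.Icc 2 n).image (fun s => Finset.Icc s n)) := by
    rw [Finset.disjoint_left]
    rintro S hS1 hS2
    simp only [mem_image, mem_Icc] at hS1 hS2
    obtain ⟨a, ha, rfl⟩ := hS1
    obtain ⟨b, hb, he⟩ := hS2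
    have h1 : (1 : ℕ) ∈ Finset.Icc 1 a := by rw [mem_Icc]; omega
    rw [← he, mem_Icc] at h1; omega
  have hne : (∅ : Finset ℕ) ∉ ((Finset.Icc 1 n).image (fun s => Finset.Icc 1 s) ∪
      (Finset.Icc 2 n).image (fun s => Finset.Icc s n)) := by
    simp only [mem_union, mem_image, mem_Icc, not_or, not_exists]
    constructor
    · rintro s ⟨hs, he⟩
      have : s ∈ Finset.Icc 1 s := by rw [mem_Icc]; omega
      rw [he] at this; exact absurd this (Finset.notMem_empty s)
    · rintro s ⟨hs, he⟩
      have : s ∈ Finset.Icc s n := by rw [mem_Icc]; omega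
      rw [he] at this; exact absurd this (Finset.notMem_empty s)
  have hcardA : A.card = 2 * n := by
    rw [hA, Finset.card_insert_of_notMem hne, Finset.card_union_of_disjoint hdisj,
      Finset.card_image_of_injOn hinj1, Finset.card_image_of_injOn hinj2,
      Nat.card_Icc, Nat.card_Icc]
    omega
  have h2n : 2 * n ≤ 2 ^ n := by
    clear * - hn
    induction n with
    | zero => omega
    | succ m ih =>
      rcases Nat.eq_or_lt_of_le hn with h | h
      · simp [← h]
      · have hm : 1 ≤ m := by omega
        have := ih hm
        have : 2 ^ m < 2 ^ (m + 1) := by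
          rw [pow_succ]; omega
        omega
  have hcardB : B.card = 2 ^ n - 2 * n := by
    rw [hB, Finset.card_sdiff_of_subset hAsub, Finset.card_powerset, hcardA, Nat.card_Icc]
    congr 1
  have hcardBR : (B.card : ℝ) = (2 : ℝ) ^ n - 2 * n := by
    rw [hcardB, Nat.cast_sub h2n]
    push_cast
    ring
  -- sum over A
  have hAsum : ∑ S ∈ A, ∏ k ∈ S, x k =
      1 + (∑ s ∈ Finset.Icc 1 n, ∏ k ∈ Finset.Icc 1 s, x k) +
        ∑ s ∈ Finset.Icc 2 n, ∏ k ∈ Finset.Icc s n, x k := by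
    rw [hA, Finset.sum_insert hne, Finset.sum_union hdisj,
      Finset.sum_image (fun a ha b hb h => hinj1 (by exact_mod_cast ha) (by exact_mod_cast hb) h),
      Finset.sum_image (fun a ha b hb h => hinj2 (by exact_mod_cast ha) (by exact_mod_cast hb) h)]
    simp only [Finset.prod_empty]
    ring
  -- expansion
  have hexp : ∏ k ∈ N, (1 + x k) = ∑ S ∈ N.powerset, ∏ k ∈ S, x k := by
    calc ∏ k ∈ N, (1 + x k) = ∏ k ∈ N, (x k + 1) :=
          Finset.prod_congr rfl fun k _ => add_comm 1 (x k)
      _ = ∑ S ∈ N.powerset, (∏ k ∈ S, x k) * ∏ k ∈ N \ S, 1 := Finset.prod_add _ _ _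
      _ = ∑ S ∈ N.powerset, ∏ k ∈ S, x k := by simp
  have hsplit : ∑ S ∈ N.powerset, ∏ k ∈ S, x k =
      (∑ S ∈ A, ∏ k ∈ S, x k) + ∑ S ∈ B, ∏ k ∈ S, x k := by
    rw [hB, ← Finset.sum_sdiff hAsub]
    ring
  rw [hexp, hsplit, hAsum]
  have : ((2 : ℝ) ^ n - 2 * n) * Real.sqrt P ≤ ∑ S ∈ B, ∏ k ∈ S, x k := by
    rw [← hcardBR]; exact hBsum
  linarith [this]
end
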